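/- arXiv:2512.12458 — 6 statements merged into one kernel-verified Lean document; each statement's English description precedes it below -/
import Mathlib

section
/- Let n ≥ 2 be a fixed integer. For each dimension m, let X_m be a nonnegative real-valued random variable with E[X_m] > 0 and finite variance, and let X_{m,1}, …, X_{m,n} be n independent copies of X_m. If lim_{m→∞} Var[X_m]/(E[X_m])² = 0, then for every ε > 0, lim_{m→∞} Pr[ max_{1≤i≤n} X_{m,i} ≤ (1+ε) · min_{1≤i≤n} X_{m,i} ] = 1. -/
open MeasureTheory ProbabilityTheory Filter

/-- Beyer et al. forward direction, paper Theorem 4.1, "⟹":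
If the relative variance `Var[X_m] / (E[X_m])²` tends to `0` as the dimension `m → ∞`,
then for every `ε > 0` the probability that the maximum of `n` independent copies of `X_m`
is at most `(1+ε)` times their minimum tends to `1`, i.e. the problem is unstable. -/
theorem stmt_0 {n : ℕ} (hn : 2 ≤ n)
    (Ω : ℕ → Type) [∀ m, MeasureSpace (Ω m)]
    [∀ m, IsProbabilityMeasure (ℙ : Measure (Ω m))]
    (X : (m : ℕ) → Fin n → Ω m → ℝ)
    (hmeas : ∀ m i, Measurable (X m i))
    (hnonneg : ∀ m i ω, 0 ≤ X m i ω)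
    (hindep : ∀ m, iIndepFun (m := fun _ => Real.measurableSpace) (X m) ℙ)
    (hident : ∀ m i, Measure.map (X m i) ℙ = Measure.map (X m ⟨0, by omega⟩) ℙ)
    (hL2 : ∀ m i, MemLp (X m i) 2 ℙ)
    (hEpos : ∀ m, 0 < ∫ ω, X m ⟨0, by omega⟩ ω)
    (hRelVar : Tendsto
      (fun m => variance (X m ⟨0, by omega⟩) ℙ / (∫ ω, X m ⟨0, by omega⟩ ω) ^ 2)
      atTop (nhds 0)) :
    ∀ ε > (0 : ℝ), Tendsto
      (fun m => (ℙ : Measure (Ω m))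
        {ω | (⨆ i, X m i ω) ≤ (1 + ε) * ⨅ i, X m i ω})
      atTop (nhds 1) := by
  intro ε hε
  haveI : NeZero n := ⟨by omega⟩
  have hNE : Nonempty (Fin n) := ⟨⟨0, by omega⟩⟩
  set δ : ℝ := ε / (2 + ε) with hδdef
  have h2ε : (0:ℝ) < 2 + ε := by linarith
  have hδpos : 0 < δ := div_pos hε h2ε
  have hδ1 : δ < 1 := by
    rw [hδdef, div_lt_one h2ε]; linarith
  have hkey : (1 + ε) * (1 - δ) = 1 + δ := by
    rw [hδdef]; field_simp; ring
  set μ : ℕ → ℝ := fun m => ∫ ω, X m ⟨0, by omega⟩ ω with hμdef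
  have hμpos : ∀ m, 0 < μ m := hEpos
  set V : ℕ → ℝ := fun m => variance (X m ⟨0, by omega⟩) ℙ with hVdef
  set c : ℕ → ℝ := fun m => δ * μ m with hcdef
  have hcpos : ∀ m, 0 < c m := fun m => mul_pos hδpos (hμpos m)
  have hid : ∀ m i, IdentDistrib (X m i) (X m ⟨0, by omega⟩) ℙ ℙ :=
    fun m i => ⟨(hmeas m i).aemeasurable, (hmeas m _).aemeasurable, hident m i⟩
  -- the bad sets
  set C : (m : ℕ) → Fin n → Set (Ω m) := fun m i => {ω | c m ≤ |X m i ω - μ m|} with hCdef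
  have hCmeas : ∀ m i, MeasurableSet (C m i) :=
    fun m i => measurableSet_le measurable_const ((hmeas m i).sub measurable_const).abs
  have hcheb : ∀ m i, (ℙ : Measure (Ω m)) (C m i) ≤ ENNReal.ofReal (V m / (c m) ^ 2) := by
    intro m i
    have h := meas_ge_le_variance_div_sq (μ := (ℙ : Measure (Ω m))) (hL2 m i) (hcpos m)
    rwa [(hid m i).integral_eq, (hid m i).variance_eq] at h
  set a : ℕ → ENNReal := fun m => (n : ENNReal) * ENNReal.ofReal (V m / (c m) ^ 2) with hadef
  have hunion : ∀ m, (ℙ : Measure (Ω m)) (⋃ i, C m i) ≤ a m := by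
    intro m
    calc (ℙ : Measure (Ω m)) (⋃ i, C m i) ≤ ∑' i, (ℙ : Measure (Ω m)) (C m i) :=
          measure_iUnion_le _
      _ ≤ ∑' _i : Fin n, ENNReal.ofReal (V m / (c m) ^ 2) :=
          ENNReal.tsum_le_tsum fun i => hcheb m i
      _ = a m := by
          rw [tsum_fintype]
          simp [hadef, Finset.sum_const, mul_comm]
  -- good set inclusion
  have hsubset : ∀ m, (⋃ i, C m i)ᶜ ⊆
      {ω | (⨆ i, X m i ω) ≤ (1 + ε) * ⨅ i, X m i ω} := by
    intro m ω hω
    simp only [Set.mem_compl_iff, Set.mem_iUnion, not_exists, hCdef, Set.mem_setOf_eq,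
      not_le] at hω
    have hub : ∀ i, X m i ω ≤ (1 + δ) * μ m := by
      intro i
      have := (abs_lt.mp (hω i)).2
      simp only [hcdef] at this
      nlinarith [hμpos m]
    have hlb : ∀ i, (1 - δ) * μ m ≤ X m i ω := by
      intro i
      have := (abs_lt.mp (hω i)).1
      simp only [hcdef] at this
      nlinarith [hμpos m]
    have hsup : (⨆ i, X m i ω) ≤ (1 + δ) * μ m := ciSup_le hub
    have hinf : (1 - δ) * μ m ≤ ⨅ i, X m i ω := le_ciInf hlb
    have : (1 + δ) * μ m ≤ (1 + ε) * ⨅ i, X m i ω := by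
      calc (1 + δ) * μ m = (1 + ε) * ((1 - δ) * μ m) := by rw [← hkey]; ring
        _ ≤ (1 + ε) * ⨅ i, X m i ω :=
          mul_le_mul_of_nonneg_left hinf (by linarith)
    exact le_trans hsup this
  -- lower bound
  have hlow : ∀ m, 1 - a m ≤ (ℙ : Measure (Ω m))
      {ω | (⨆ i, X m i ω) ≤ (1 + ε) * ⨅ i, X m i ω} := by
    intro m
    have h1 : (ℙ : Measure (Ω m)) ((⋃ i, C m i)ᶜ) = 1 - (ℙ : Measure (Ω m)) (⋃ i, C m i) :=
      prob_compl_eq_one_sub (MeasurableSet.iUnion fun i => hCmeas m i)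
    calc 1 - a m ≤ 1 - (ℙ : Measure (Ω m)) (⋃ i, C m i) := tsub_le_tsub_left (hunion m) 1
      _ = (ℙ : Measure (Ω m)) ((⋃ i, C m i)ᶜ) := h1.symm
      _ ≤ _ := measure_mono (hsubset m)
  -- a m → 0
  have ha0 : Tendsto a atTop (nhds 0) := by
    have hVeq : ∀ m, V m / (c m) ^ 2 = (V m / (μ m) ^ 2) * (1 / δ ^ 2) := by
      intro m
      rw [hcdef]
      field_simp
    have h1 : Tendsto (fun m => V m / (c m) ^ 2) atTop (nhds 0) := by
      simp only [hVeq]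
      have := hRelVar.mul_const (1 / δ ^ 2)
      rw [zero_mul] at this
      exact this
    have h2 : Tendsto (fun m => ENNReal.ofReal (V m / (c m) ^ 2)) atTop (nhds 0) := by
      have := (ENNReal.continuous_ofReal.tendsto 0).comp h1
      simpa [Function.comp_def] using this
    have h3 := ENNReal.Tendsto.const_mul h2 (Or.inr (ENNReal.natCast_ne_top n))
    simpa using h3
  -- squeeze
  have hupper : Tendsto (fun m => (1 - a m : ENNReal)) atTop (nhds 1) := by
    have := ENNReal.Tendsto.sub (tendsto_const_nhds (x := (1 : ENNReal))) ha0
      (Or.inl ENNReal.one_ne_top)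
    simpa using this
  exact tendsto_of_tendsto_of_tendsto_of_le_of_le hupper tendsto_const_nhds
    hlow (fun m => prob_le_one)
end

section
/- Fix a constant c > 1. Let D' be a nonempty finite set of positive real numbers partitioned into nonempty subsets D_1, …, D_n (each number representing the distance δ(q,d) from a fixed query q to a database vector d). Define DMIN := min over all elements of D', DMAX := max over all elements of D', DMIN' := min_k min_{d∈D_k} δ(q,d), and DMAX' := max_k min_{d∈D_k} δ(q,d). If the non-degeneracy condition c · max_k min_{d∈D_k} δ(q,d) ≥ max_k max_{d∈D_k} δ(q,d) holds and DMAX/DMIN > c, then DMAX'/DMIN' ≥ (1/c) · (DMAX/DMIN) > 1. -/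
/-- core inequality of paper Lemma 5.2, Chamfer stability with singleton
query sets.  The database vectors are indexed by a finite nonempty type `ι`, `δ i > 0` is
the distance from the fixed query to vector `i`, and `part : ι → Fin n` assigns each vector
to one of the `n` document sets (each nonempty, i.e. `part` is surjective).
`DMIN = ⨅ i, δ i`, `DMAX = ⨆ i, δ i`,
`DMIN' = ⨅ k ⨅_{part i = k} δ i` and `DMAX' = ⨆ k ⨅_{part i = k} δ i`.
Under the non-degeneracy condition `c · max_k min_{d∈D_k} δ ≥ max_k max_{d∈D_k} δ`
and `DMAX/DMIN > c`, we get `DMAX'/DMIN' ≥ (1/c)·(DMAX/DMIN) > 1`. -/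
theorem stmt_3 {c : ℝ} (hc : 1 < c) {n : ℕ} (hn : 0 < n)
    {ι : Type} [Fintype ι] [Nonempty ι]
    (δ : ι → ℝ) (hδ : ∀ i, 0 < δ i)
    (part : ι → Fin n) (hpart : Function.Surjective part)
    (hnondeg : c * (⨆ k, ⨅ i : {i // part i = k}, δ i.1) ≥
      ⨆ k, ⨆ i : {i // part i = k}, δ i.1)
    (hstable : (⨆ i, δ i) / (⨅ i, δ i) > c) :
    (⨆ k, ⨅ i : {i // part i = k}, δ i.1) / (⨅ k, ⨅ i : {i // part i = k}, δ i.1)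
        ≥ (1 / c) * ((⨆ i, δ i) / (⨅ i, δ i)) ∧
      (1 / c) * ((⨆ i, δ i) / (⨅ i, δ i)) > 1 := by
  have hc0 : (0:ℝ) < c := lt_trans one_pos hc
  haveI : ∀ k : Fin n, Nonempty {i // part i = k} := fun k => by
    obtain ⟨i, hi⟩ := hpart k; exact ⟨⟨i, hi⟩⟩
  haveI : Nonempty (Fin n) := ⟨⟨0, hn⟩⟩
  set DMIN := ⨅ i, δ i with hDMINdef
  set DMAX := ⨆ i, δ i with hDMAXdef
  set A : Fin n → ℝ := fun k => ⨅ i : {i // part i = k}, δ i.1 with hA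
  -- boundedness helpers
  have bddB : ∀ k, BddBelow (Set.range fun i : {i // part i = k} => δ i.1) :=
    fun k => (Set.finite_range _).bddBelow
  have bddA : ∀ k, BddAbove (Set.range fun i : {i // part i = k} => δ i.1) :=
    fun k => (Set.finite_range _).bddAbove
  have bddBι : BddBelow (Set.range δ) := (Set.finite_range _).bddBelow
  have bddAι : BddAbove (Set.range δ) := (Set.finite_range _).bddAbove
  have bddBA : BddBelow (Set.range A) := (Set.finite_range _).bddBelow
  have bddAA : BddAbove (Set.range A) := (Set.finite_range _).bddAbove
  have hDMINpos : 0 < DMIN := by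
    obtain ⟨i, hi⟩ := Finite.exists_min δ
    have : DMIN = δ i := le_antisymm (ciInf_le bddBι i) (le_ciInf hi)
    rw [this]; exact hδ i
  -- DMIN' = DMIN
  have hDMIN' : (⨅ k, A k) = DMIN := by
    apply le_antisymm
    · apply le_ciInf; intro i
      calc (⨅ k, A k) ≤ A (part i) := ciInf_le bddBA (part i)
        _ ≤ δ i := ciInf_le (bddB (part i)) ⟨i, rfl⟩
    · apply le_ciInf; intro k
      apply le_ciInf; intro i
      exact ciInf_le bddBι i.1
  -- DMAX ≤ ⨆ k ⨆ i, δ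
  have hDMAXle : DMAX ≤ ⨆ k, ⨆ i : {i // part i = k}, δ i.1 := by
    apply ciSup_le; intro i
    calc δ i ≤ ⨆ j : {j // part j = part i}, δ j.1 :=
          le_ciSup (bddA (part i)) ⟨i, rfl⟩
      _ ≤ ⨆ k, ⨆ j : {j // part j = k}, δ j.1 :=
          le_ciSup (f := fun k => ⨆ j : {j // part j = k}, δ j.1)
            ((Set.finite_range _).bddAbove) (part i)
  have hDMAX'ge : DMAX / c ≤ ⨆ k, A k := by
    rw [div_le_iff₀ hc0, mul_comm]
    exact le_trans hDMAXle hnondeg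
  have hicpos : (0:ℝ) < 1 / c := by positivity
  constructor
  · rw [hDMIN', ge_iff_le]
    have h1 : 1 / c * (DMAX / DMIN) = (DMAX / c) / DMIN := by ring
    rw [h1]
    gcongr
  · calc (1:ℝ) = 1 / c * c := by field_simp
      _ < 1 / c * (DMAX / DMIN) := mul_lt_mul_of_pos_left hstable hicpos
end

section
/- Let Δ > 0 and α > 0. Let δ be a random variable with 0 ≤ δ ≤ Δ almost surely and E[δ] > 0, and let B be an event with p := Pr[B] ∈ (0,1). Define the penalized distance δ' := δ + α·1_B, where 1_B is the indicator of B. Then Var(δ') / (E[δ'])² ≥ ( α²·p·(1−p) − 2·α·p·Δ ) / (Δ + α·p)². -/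
open MeasureTheory ProbabilityTheory

/-- quantitative lower bound underlying paper Theorem 6.3, stability of
filtered search: for a distance `δ` with `0 ≤ δ ≤ Δ` a.s. and `E[δ] > 0`, a filter-mismatch
event `B` with `p = Pr[B] ∈ (0,1)`, and the penalized distance `δ' = δ + α·1_B`,
`RelVar(δ') ≥ (α²·p·(1-p) - 2·α·p·Δ) / (Δ + α·p)²`. -/
theorem stmt_5 {Ω : Type} [MeasureSpace Ω] [IsProbabilityMeasure (ℙ : Measure Ω)]
    {Δ α : ℝ} (hΔ : 0 < Δ) (hα : 0 < α)
    (δ : Ω → ℝ) (hmeas : Measurable δ)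
    (hbd : ∀ᵐ ω, 0 ≤ δ ω ∧ δ ω ≤ Δ)
    (hEpos : 0 < ∫ ω, δ ω)
    (B : Set Ω) (hB : MeasurableSet B)
    (hp0 : 0 < (ℙ B).toReal) (hp1 : (ℙ B).toReal < 1) :
    variance (fun ω => δ ω + α * B.indicator (fun _ => (1 : ℝ)) ω) ℙ
        / (∫ ω, (δ ω + α * B.indicator (fun _ => (1 : ℝ)) ω)) ^ 2
      ≥ (α ^ 2 * (ℙ B).toReal * (1 - (ℙ B).toReal) - 2 * α * (ℙ B).toReal * Δ)
        / (Δ + α * (ℙ B).toReal) ^ 2 := by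
  set p : ℝ := (ℙ B).toReal with hp
  set I : Ω → ℝ := B.indicator (fun _ => (1 : ℝ)) with hI
  set f : Ω → ℝ := fun ω => δ ω + α * I ω with hf
  have hImeas : Measurable I := measurable_const.indicator hB
  have hIbd : ∀ ω, 0 ≤ I ω ∧ I ω ≤ 1 := fun ω => by
    unfold I; by_cases h : ω ∈ B <;> simp [Set.indicator, h]
  have hfmeas : Measurable f := hmeas.add (hImeas.const_mul α)
  -- boundedness ⇒ MemLp 2
  have hmem2 : ∀ (g : Ω → ℝ) (C : ℝ), Measurable g → (∀ᵐ ω, ‖g ω‖ ≤ C) →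
      MemLp g 2 ℙ := fun g C hg hgb =>
    (memLp_top_of_bound hg.aestronglyMeasurable C hgb).mono_exponent le_top
  have hδ2 : MemLp δ 2 ℙ := by
    refine hmem2 δ Δ hmeas ?_
    filter_upwards [hbd] with ω ⟨h0, h1⟩
    rw [Real.norm_eq_abs, abs_of_nonneg h0]; exact h1
  have hf2 : MemLp f 2 ℙ := by
    refine hmem2 f (Δ + α) hfmeas ?_
    filter_upwards [hbd] with ω ⟨h0, h1⟩
    have h2 := hIbd ω
    show ‖δ ω + α * I ω‖ ≤ Δ + α
    rw [Real.norm_eq_abs, abs_of_nonneg (by nlinarith [h2.1])]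
    nlinarith [h2.1, h2.2]
  -- integrabilities
  have hδint : Integrable δ ℙ := hδ2.integrable (by norm_num)
  have hIint : Integrable I ℙ := (memLp_top_of_bound hImeas.aestronglyMeasurable 1
      (ae_of_all _ fun ω => by
        have := hIbd ω; rw [Real.norm_eq_abs, abs_of_nonneg this.1]; exact this.2)).integrable
      le_top
  have hδIint : Integrable (fun ω => δ ω * I ω) ℙ := by
    refine (hmem2 _ Δ (hmeas.mul hImeas) ?_).integrable (by norm_num)
    filter_upwards [hbd] with ω ⟨h0, h1⟩
    have := hIbd ω
    rw [Real.norm_eq_abs, Pi.mul_apply, abs_of_nonneg (mul_nonneg h0 this.1)]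
    nlinarith [this.1, this.2]
  have hδsqint : Integrable (fun ω => δ ω ^ 2) ℙ := hδ2.integrable_sq
  have hEI : ∫ ω, I ω = p := by
    unfold I; rw [integral_indicator_const (1 : ℝ) hB]; simp [hp, Measure.real]
  -- mean of f
  have hEf : ∫ ω, f ω = (∫ ω, δ ω) + α * p := by
    unfold f
    rw [integral_add hδint (hIint.const_mul α), integral_const_mul, hEI]
  -- E[f²]
  have hIsq : ∀ ω, I ω ^ 2 = I ω := fun ω => by
    unfold I; by_cases h : ω ∈ B <;> simp [Set.indicator, h]
  have hEfsq : ∫ ω, f ω ^ 2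
      = (∫ ω, δ ω ^ 2) + 2 * α * (∫ ω, δ ω * I ω) + α ^ 2 * p := by
    have : ∀ ω, f ω ^ 2 = δ ω ^ 2 + (2 * α) * (δ ω * I ω) + α ^ 2 * I ω := by
      intro ω; have := hIsq ω; unfold f; ring_nf; nlinarith [hIsq ω]
    simp_rw [this]
    have hsum : Integrable (fun ω => δ ω ^ 2 + 2 * α * (δ ω * I ω)) ℙ :=
      hδsqint.add (hδIint.const_mul (2 * α))
    rw [integral_add hsum (hIint.const_mul (α ^ 2)),
      integral_add hδsqint (hδIint.const_mul (2 * α)), integral_const_mul, integral_const_mul, hEI]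
  -- variance identities
  have hVarf : variance f ℙ = (∫ ω, f ω ^ 2) - (∫ ω, f ω) ^ 2 := by
    have := variance_eq_sub (μ := ℙ) hf2
    simpa [Pi.pow_apply] using this
  have hVarδ : (0:ℝ) ≤ (∫ ω, δ ω ^ 2) - (∫ ω, δ ω) ^ 2 := by
    have h1 := variance_eq_sub (μ := ℙ) hδ2
    have h2 := variance_nonneg δ ℙ
    rw [h1] at h2
    simpa [Pi.pow_apply] using h2
  -- bounds
  have hEδΔ : ∫ ω, δ ω ≤ Δ := by
    calc ∫ ω, δ ω ≤ ∫ _, Δ ∂(ℙ : Measure Ω) :=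
          integral_mono_ae hδint (integrable_const Δ) (by filter_upwards [hbd] with ω h; exact h.2)
      _ = Δ := by simp
  have hEδI0 : 0 ≤ ∫ ω, δ ω * I ω := by
    refine integral_nonneg_of_ae ?_
    filter_upwards [hbd] with ω h
    exact mul_nonneg h.1 (hIbd ω).1
  have hEδI : ∫ ω, δ ω * I ω ≥ 0 := hEδI0
  have hp1' : p ≤ 1 := le_of_lt hp1
  -- lower bound on variance
  have hVarlb : variance f ℙ ≥ α ^ 2 * p * (1 - p) - 2 * α * p * Δ := by
    rw [hVarf, hEfsq, hEf]
    nlinarith [hEδI0, hEδΔ, hVarδ, mul_pos hα hp0, hEpos]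
  have hEfpos : 0 < ∫ ω, f ω := by
    rw [hEf]; positivity
  have hEfub : ∫ ω, f ω ≤ Δ + α * p := by
    rw [hEf]; linarith
  have hden : (0:ℝ) < (Δ + α * p) ^ 2 := by positivity
  have hsq : (∫ ω, f ω) ^ 2 ≤ (Δ + α * p) ^ 2 := by nlinarith
  have hVar0 : 0 ≤ variance f ℙ := variance_nonneg f ℙ
  have step1 : variance f ℙ / (Δ + α * p) ^ 2 ≤ variance f ℙ / (∫ ω, f ω) ^ 2 :=
    div_le_div_of_nonneg_left hVar0 (by positivity) hsq
  have step2 : (α ^ 2 * p * (1 - p) - 2 * α * p * Δ) / (Δ + α * p) ^ 2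
      ≤ variance f ℙ / (Δ + α * p) ^ 2 := by gcongr
  exact le_trans step2 step1
end

section
/- Let Δ > 0 and 0 < p_max < 1. Let δ be a random variable with 0 ≤ δ ≤ Δ almost surely and E[δ] > 0, and let B be an event with p := Pr[B] satisfying 0 < p ≤ p_max. Define δ' := δ + α·1_B. If α > 2Δ/(1 − p_max), then Var(δ') / (E[δ'])² ≥ α·p·( α·(1 − p_max) − 2Δ ) / (Δ + α·p)² > 0. -/
open MeasureTheory ProbabilityTheory

/-- paper Theorem 6.3, stability of filtered search, at a fixed dimension:
for a distance `δ` with `0 ≤ δ ≤ Δ` a.s. and `E[δ] > 0`, and a filter-mismatch event `B`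
with `0 < p = Pr[B] ≤ p_max < 1`, if the penalty satisfies `α > 2Δ/(1 - p_max)` then the
relative variance of the penalized distance `δ' = δ + α·1_B` satisfies
`RelVar(δ') ≥ α·p·(α·(1 - p_max) - 2Δ)/(Δ + α·p)² > 0`. -/
theorem stmt_6 {Ω : Type} [MeasureSpace Ω] [IsProbabilityMeasure (ℙ : Measure Ω)]
    {Δ pmax α : ℝ} (hΔ : 0 < Δ) (hpmax0 : 0 < pmax) (hpmax1 : pmax < 1)
    (δ : Ω → ℝ) (hmeas : Measurable δ)
    (hbd : ∀ᵐ ω, 0 ≤ δ ω ∧ δ ω ≤ Δ)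
    (hEpos : 0 < ∫ ω, δ ω)
    (B : Set Ω) (hB : MeasurableSet B)
    (hp0 : 0 < (ℙ B).toReal) (hp : (ℙ B).toReal ≤ pmax)
    (hα : α > 2 * Δ / (1 - pmax)) :
    variance (fun ω => δ ω + α * B.indicator (fun _ => (1 : ℝ)) ω) ℙ
        / (∫ ω, (δ ω + α * B.indicator (fun _ => (1 : ℝ)) ω)) ^ 2
      ≥ α * (ℙ B).toReal * (α * (1 - pmax) - 2 * Δ) / (Δ + α * (ℙ B).toReal) ^ 2 ∧
    (0 : ℝ) < α * (ℙ B).toReal * (α * (1 - pmax) - 2 * Δ) / (Δ + α * (ℙ B).toReal) ^ 2 := by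
  have h1p : 0 < 1 - pmax := by linarith
  have hαpos : 0 < α := lt_trans (div_pos (by linarith) h1p) hα
  set p : ℝ := (ℙ B).toReal with hpdef
  set ind : Ω → ℝ := B.indicator (fun _ => (1 : ℝ)) with hinddef
  have hind_mem : ∀ ω ∈ B, ind ω = 1 := fun ω h => Set.indicator_of_mem h _
  have hind_cases : ∀ ω, ind ω = 0 ∨ ind ω = 1 := by
    intro ω; by_cases h : ω ∈ B
    · right; exact Set.indicator_of_mem h _
    · left; exact Set.indicator_of_notMem h _
  have hind_meas : Measurable ind := measurable_const.indicator hB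
  -- basic integrals
  have hEind : ∫ ω, ind ω = p := by
    simp [hinddef, integral_indicator_const (1 : ℝ) hB, hpdef, Measure.real]
  -- MemLp facts
  have hδbd : ∀ᵐ ω, ‖δ ω‖ ≤ Δ := by
    filter_upwards [hbd] with ω h
    rw [Real.norm_eq_abs, abs_le]; exact ⟨by linarith [h.1], h.2⟩
  have hδmem2 : MemLp δ 2 ℙ := MemLp.of_bound hmeas.aestronglyMeasurable Δ hδbd
  have hδint : Integrable δ := hδmem2.integrable one_le_two
  have hδ'mem2 : MemLp (fun ω => δ ω + α * ind ω) 2 ℙ := by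
    apply MemLp.of_bound ((hmeas.add (hind_meas.const_mul α)).aestronglyMeasurable) (Δ + α)
    filter_upwards [hbd] with ω h
    rw [Real.norm_eq_abs, abs_le]
    rcases hind_cases ω with h0 | h1
    · simp only [Pi.add_apply, h0]; constructor <;> [linarith [h.1]; linarith [h.2]]
    · simp only [Pi.add_apply, h1]; constructor <;> [linarith [h.1]; linarith [h.2]]
  have hindint : Integrable ind := (integrable_const (1:ℝ)).indicator hB
  have hBδint : Integrable (B.indicator δ) := hδint.indicator hB
  have hsqint : Integrable (fun ω => δ ω ^ 2) := by
    have := hδmem2.integrable_sq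
    simpa using this
  -- E[δ'] = μδ + α p
  have hE' : (∫ ω, (δ ω + α * ind ω)) = (∫ ω, δ ω) + α * p := by
    rw [integral_add hδint (hindint.const_mul α), integral_const_mul, hEind]
  -- E[δ'^2]
  have hsq : ∀ ω, (δ ω + α * ind ω) ^ 2
      = δ ω ^ 2 + 2 * α * (B.indicator δ ω) + α ^ 2 * ind ω := by
    intro ω
    by_cases h : ω ∈ B
    · rw [Set.indicator_of_mem h, hind_mem ω h]; ring
    · rw [Set.indicator_of_notMem h, hinddef, Set.indicator_of_notMem h]; ring
  set I : ℝ := ∫ ω, B.indicator δ ω with hIdef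
  have hS' : (∫ ω, (δ ω + α * ind ω) ^ 2)
      = (∫ ω, δ ω ^ 2) + 2 * α * I + α ^ 2 * p := by
    rw [show (fun ω => (δ ω + α * ind ω) ^ 2)
        = fun ω => δ ω ^ 2 + 2 * α * (B.indicator δ ω) + α ^ 2 * ind ω from funext hsq]
    have i1 : Integrable (fun ω => δ ω ^ 2 + 2 * α * B.indicator δ ω) :=
      hsqint.add (hBδint.const_mul _)
    have i2 : Integrable (fun ω => α ^ 2 * ind ω) := hindint.const_mul _
    have i3 : Integrable (fun ω => 2 * α * B.indicator δ ω) := hBδint.const_mul _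
    rw [integral_add i1 i2, integral_add hsqint i3, integral_const_mul, integral_const_mul, hEind]
  -- variance identity
  have hVar' : variance (fun ω => δ ω + α * ind ω) ℙ
      = variance δ ℙ + 2 * α * (I - (∫ ω, δ ω) * p) + α ^ 2 * (p - p ^ 2) := by
    rw [variance_eq_sub hδ'mem2, variance_eq_sub hδmem2]
    have e1 : (ℙ : Measure Ω)[(fun ω => δ ω + α * ind ω) ^ 2]
        = ∫ ω, (δ ω + α * ind ω) ^ 2 := by simp [Pi.pow_apply]
    have e2 : (ℙ : Measure Ω)[δ ^ 2] = ∫ ω, δ ω ^ 2 := by simp [Pi.pow_apply]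
    rw [e1, e2, hS', hE']
    ring
  -- bounds
  have hI0 : 0 ≤ I := by
    apply integral_nonneg_of_ae
    filter_upwards [hbd] with ω h
    exact Set.indicator_apply_nonneg fun _ => h.1
  have hμΔ : (∫ ω, δ ω) ≤ Δ := by
    calc (∫ ω, δ ω) ≤ ∫ _ω, Δ := by
          apply integral_mono_ae hδint (integrable_const Δ)
          filter_upwards [hbd] with ω h using h.2
      _ = Δ := by simp
  have hVarLB : variance (fun ω => δ ω + α * ind ω) ℙ ≥ α * p * (α * (1 - pmax) - 2 * Δ) := by
    rw [hVar']
    have h1 : 0 ≤ variance δ ℙ := variance_nonneg δ ℙ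
    have h2 : I - (∫ ω, δ ω) * p ≥ -(Δ * p) := by nlinarith [hp0, hEpos]
    have h3 : p - p ^ 2 ≥ p * (1 - pmax) := by nlinarith
    nlinarith [sq_nonneg α, mul_pos hαpos hp0]
  have hNpos : 0 < α * p * (α * (1 - pmax) - 2 * Δ) := by
    have : α * (1 - pmax) > 2 * Δ := by
      have := (div_lt_iff₀ h1p).mp hα
      linarith
    have := mul_pos hαpos hp0
    nlinarith
  have hE'pos : 0 < (∫ ω, (δ ω + α * ind ω)) := by
    rw [hE']; positivity
  have hE'le : (∫ ω, (δ ω + α * ind ω)) ≤ Δ + α * p := by rw [hE']; linarith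
  have hDpos : 0 < Δ + α * p := by positivity
  constructor
  · calc α * p * (α * (1 - pmax) - 2 * Δ) / (Δ + α * p) ^ 2
        ≤ α * p * (α * (1 - pmax) - 2 * Δ) / (∫ ω, (δ ω + α * ind ω)) ^ 2 := by
          apply div_le_div_of_nonneg_left hNpos.le (by positivity)
          exact pow_le_pow_left₀ hE'pos.le hE'le 2
      _ ≤ variance (fun ω => δ ω + α * ind ω) ℙ / (∫ ω, (δ ω + α * ind ω)) ^ 2 := by
          apply div_le_div_of_nonneg_right hVarLB (by positivity)
  · exact div_pos hNpos (by positivity)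
end

section
/- Fix a real number p ≥ 1, a positive integer m, and a real number α with 1/2 ≤ α ≤ 1. Let q, d ∈ ℝ^m have nonnegative coordinates with Σ_{i=1}^m q_i^p = Σ_{i=1}^m d_i^p = 1. Let T_q, T_d ⊆ {1,…,m} be disjoint index sets with Σ_{i∈T_q} q_i^p ≥ α and Σ_{i∈T_d} d_i^p ≥ α. Then Σ_{i=1}^m |q_i − d_i|^p ≥ 2 · ( α^{1/p} − (1−α)^{1/p} )^p. -/
open Finset

/-- Restricted reverse triangle inequality for ℓ_p on a finset. -/
lemma restricted_reverse {p : ℝ} (hp : 1 ≤ p) {m : ℕ}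
    (s : Finset (Fin m)) (q d : Fin m → ℝ) (hq : ∀ i, 0 ≤ q i) (hd : ∀ i, 0 ≤ d i)
    {A B : ℝ} (hA0 : 0 ≤ A) (hA : A ≤ ∑ i ∈ s, q i ^ p) (hB : ∑ i ∈ s, d i ^ p ≤ B)
    (hAB : B ^ (1 / p) ≤ A ^ (1 / p)) :
    (A ^ (1 / p) - B ^ (1 / p)) ^ p ≤ ∑ i ∈ s, |q i - d i| ^ p := by
  have hp0 : 0 < p := lt_of_lt_of_le one_pos hp
  have h1p : 0 ≤ 1 / p := by positivity
  have hB0 : (0:ℝ) ≤ B := le_trans (Finset.sum_nonneg fun i _ => Real.rpow_nonneg (hd i) p) hB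
  have hsum0 : (0:ℝ) ≤ ∑ i ∈ s, |q i - d i| ^ p :=
    Finset.sum_nonneg fun i _ => Real.rpow_nonneg (abs_nonneg _) p
  -- pointwise q i ≤ |q i - d i| + d i
  have hpt : ∀ i ∈ s, q i ^ p ≤ (|q i - d i| + d i) ^ p := by
    intro i _
    apply Real.rpow_le_rpow (hq i) _ (le_of_lt hp0)
    have := abs_sub_abs_le_abs_sub (q i) (d i)
    rw [abs_of_nonneg (hq i), abs_of_nonneg (hd i)] at this
    linarith
  have hsum : ∑ i ∈ s, q i ^ p ≤ ∑ i ∈ s, (|q i - d i| + d i) ^ p :=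
    Finset.sum_le_sum hpt
  have hmink := Real.Lp_add_le_of_nonneg (f := fun i => |q i - d i|) (g := d) s hp
    (fun i _ => abs_nonneg _) (fun i _ => hd i)
  have hchain : A ^ (1 / p) ≤ (∑ i ∈ s, |q i - d i| ^ p) ^ (1 / p) + B ^ (1 / p) := by
    calc A ^ (1 / p) ≤ (∑ i ∈ s, (|q i - d i| + d i) ^ p) ^ (1 / p) :=
          Real.rpow_le_rpow hA0 (le_trans hA hsum) h1p
      _ ≤ (∑ i ∈ s, |q i - d i| ^ p) ^ (1 / p) + (∑ i ∈ s, d i ^ p) ^ (1 / p) := hmink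
      _ ≤ (∑ i ∈ s, |q i - d i| ^ p) ^ (1 / p) + B ^ (1 / p) := by
          gcongr
          exact Finset.sum_nonneg fun i _ => Real.rpow_nonneg (hd i) p
  have hkey : A ^ (1 / p) - B ^ (1 / p) ≤ (∑ i ∈ s, |q i - d i| ^ p) ^ (1 / p) := by
    linarith
  calc (A ^ (1 / p) - B ^ (1 / p)) ^ p
      ≤ ((∑ i ∈ s, |q i - d i| ^ p) ^ (1 / p)) ^ p :=
        Real.rpow_le_rpow (by linarith) hkey (le_of_lt hp0)
    _ = ∑ i ∈ s, |q i - d i| ^ p := by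
        rw [← Real.rpow_mul hsum0, one_div, inv_mul_cancel₀ (ne_of_gt hp0), Real.rpow_one]

/-- disjoint-head separation lemma inside paper Theorem 7.3: for
`p ≥ 1`, `α ∈ [1/2, 1]`, ℓ_p-unit nonnegative vectors `q, d ∈ ℝ^m`, and disjoint index
sets `T_q, T_d` each carrying at least `α` of the corresponding vector's ℓ_p^p mass,
`Σ_i |q_i - d_i|^p ≥ 2·(α^{1/p} - (1-α)^{1/p})^p`. -/
theorem stmt_12 {p : ℝ} (hp : 1 ≤ p) {m : ℕ} (hm : 0 < m)
    {α : ℝ} (hα1 : 1 / 2 ≤ α) (hα2 : α ≤ 1)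
    (q d : Fin m → ℝ) (hq : ∀ i, 0 ≤ q i) (hd : ∀ i, 0 ≤ d i)
    (hqunit : ∑ i, q i ^ p = 1) (hdunit : ∑ i, d i ^ p = 1)
    (Tq Td : Finset (Fin m)) (hdisj : Disjoint Tq Td)
    (hTq : α ≤ ∑ i ∈ Tq, q i ^ p) (hTd : α ≤ ∑ i ∈ Td, d i ^ p) :
    ∑ i, |q i - d i| ^ p ≥ 2 * (α ^ (1 / p) - (1 - α) ^ (1 / p)) ^ p := by
  have hp0 : 0 < p := lt_of_lt_of_le one_pos hp
  have hα0 : (0:ℝ) ≤ α := by linarith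
  have h1α0 : (0:ℝ) ≤ 1 - α := by linarith
  have hAB : (1 - α) ^ (1 / p) ≤ α ^ (1 / p) :=
    Real.rpow_le_rpow h1α0 (by linarith) (by positivity)
  -- partial sums bounded by 1
  have hqnn : ∀ i ∈ (Finset.univ : Finset (Fin m)), (0:ℝ) ≤ q i ^ p :=
    fun i _ => Real.rpow_nonneg (hq i) p
  have hdnn : ∀ i ∈ (Finset.univ : Finset (Fin m)), (0:ℝ) ≤ d i ^ p :=
    fun i _ => Real.rpow_nonneg (hd i) p
  have hunion_q : ∑ i ∈ Tq, q i ^ p + ∑ i ∈ Td, q i ^ p ≤ 1 := by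
    rw [← Finset.sum_union hdisj, ← hqunit]
    exact Finset.sum_le_sum_of_subset_of_nonneg (Finset.subset_univ _)
      (fun i _ _ => Real.rpow_nonneg (hq i) p)
  have hunion_d : ∑ i ∈ Tq, d i ^ p + ∑ i ∈ Td, d i ^ p ≤ 1 := by
    rw [← Finset.sum_union hdisj, ← hdunit]
    exact Finset.sum_le_sum_of_subset_of_nonneg (Finset.subset_univ _)
      (fun i _ _ => Real.rpow_nonneg (hd i) p)
  have hdTq : ∑ i ∈ Tq, d i ^ p ≤ 1 - α := by linarith
  have hqTd : ∑ i ∈ Td, q i ^ p ≤ 1 - α := by linarith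
  have h1 : (α ^ (1 / p) - (1 - α) ^ (1 / p)) ^ p ≤ ∑ i ∈ Tq, |q i - d i| ^ p :=
    restricted_reverse hp Tq q d hq hd hα0 hTq hdTq hAB
  have h2 : (α ^ (1 / p) - (1 - α) ^ (1 / p)) ^ p ≤ ∑ i ∈ Td, |q i - d i| ^ p := by
    have := restricted_reverse hp Td d q hd hq hα0 hTd hqTd hAB
    calc (α ^ (1 / p) - (1 - α) ^ (1 / p)) ^ p
        ≤ ∑ i ∈ Td, |d i - q i| ^ p := this
      _ = ∑ i ∈ Td, |q i - d i| ^ p := by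
          apply Finset.sum_congr rfl; intro i _; rw [abs_sub_comm]
  have hrest : ∑ i ∈ Tq ∪ Td, |q i - d i| ^ p ≤ ∑ i, |q i - d i| ^ p :=
    Finset.sum_le_sum_of_subset_of_nonneg (Finset.subset_univ _)
      (fun i _ _ => Real.rpow_nonneg (abs_nonneg _) p)
  rw [Finset.sum_union hdisj] at hrest
  linarith
end

section
/- Fix a real number p ≥ 1, a positive integer m, and parameters α ∈ [1/2, 1), γ > 0, π ∈ (0,1), ρ ∈ (0,1], τ > 0 with τ² < m and ρ > τ²/m. On a probability space, let q, d : Ω → ℝ^m be random vectors and T_q, T_d : Ω → (subsets of {1,…,m}) be random index sets such that: (i) the pair (q, T_q) is independent of the pair (d, T_d); (ii) almost surely, q and d have nonnegative coordinates with Σ_i q_i^p = Σ_i d_i^p = 1; (iii) almost surely Σ_{i∈T_q} q_i^p ≥ α; (iv) the event C := { Σ_{i∈T_d} d_i^p ≥ α } satisfies Pr[C] ≥ ρ; (v) Pr[i ∈ T_q] ≤ τ/m and Pr[i ∈ T_d] ≤ τ/m for every i; (vi) the overlap statistic S := Σ_{i ∈ T_q ∩ T_d} min{q_i^p, d_i^p}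 satisfies π ≤ Pr[S ≥ γ] and Pr[S ≥ γ] ≤ τ²/m. Define δ := (Σ_{i=1}^m |q_i − d_i|^p)^{1/p}, X := (2 − 2γ)^{1/p}, and Y_m := ((ρ − τ²/m)/(1 − π)) · 2^{1/p} · (α^{1/p} − (1−α)^{1/p}). If Y_m > X, then E[δ] > 0 and Var(δ)/(E[δ])² ≥ (π/4)·(1 − τ²/m)·(Y_m − X)². -/
open MeasureTheory ProbabilityTheory Finset

/-- We equip the (finite, hence discrete) type of finite subsets of `Fin m` with the
discrete σ-algebra, so that a random head index set is a measurable map into it. -/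
instance (m : ℕ) : MeasurableSpace (Finset (Fin m)) := ⊤

lemma aux_add_rpow {p x y : ℝ} (hx : 0 ≤ x) (hy : 0 ≤ y) (hp : 1 ≤ p) :
    x ^ p + y ^ p ≤ (x + y) ^ p := by
  lift x to NNReal using hx
  lift y to NNReal using hy
  have := NNReal.add_rpow_le_rpow_add x y hp
  have h2 : ((x ^ p + y ^ p : NNReal) : ℝ) ≤ (((x + y) ^ p : NNReal) : ℝ) := by
    exact_mod_cast this
  push_cast [NNReal.coe_rpow] at h2
  exact_mod_cast h2

lemma aux_coord {p a b : ℝ} (ha : 0 ≤ a) (hb : 0 ≤ b) (hp : 1 ≤ p) :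
    |a - b| ^ p + 2 * min (a ^ p) (b ^ p) ≤ a ^ p + b ^ p := by
  wlog hab : a ≤ b generalizing a b
  · have := this hb ha (le_of_not_ge hab)
    rwa [abs_sub_comm, min_comm, add_comm (b ^ p)] at this
  have hmin : min (a ^ p) (b ^ p) = a ^ p :=
    min_eq_left (Real.rpow_le_rpow ha hab (by linarith))
  have habs : |a - b| = b - a := by rw [abs_sub_comm]; exact abs_of_nonneg (by linarith)
  rw [hmin, habs]
  have := aux_add_rpow (x := b - a) (y := a) (by linarith) ha hp
  rw [sub_add_cancel] at this
  linarith

lemma aux_coord' {p a b : ℝ} (ha : 0 ≤ a) (hb : 0 ≤ b) (hp : 1 ≤ p) :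
    |a - b| ^ p ≤ a ^ p + b ^ p := by
  have h1 : (0:ℝ) ≤ min (a ^ p) (b ^ p) :=
    le_min (Real.rpow_nonneg ha p) (Real.rpow_nonneg hb p)
  nlinarith [aux_coord ha hb hp]

lemma aux_upper {m : ℕ} {p : ℝ} (hp : 1 ≤ p) (q d : Fin m → ℝ)
    (hq : ∀ i, 0 ≤ q i) (hd : ∀ i, 0 ≤ d i)
    (hq1 : ∑ i, q i ^ p = 1) (hd1 : ∑ i, d i ^ p = 1) (s : Finset (Fin m)) :
    ∑ i, |q i - d i| ^ p ≤ 2 - 2 * ∑ i ∈ s, min (q i ^ p) (d i ^ p) := by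
  have key : ∑ i, (|q i - d i| ^ p + (if i ∈ s then 2 * min (q i ^ p) (d i ^ p) else 0))
      ≤ ∑ i, (q i ^ p + d i ^ p) := by
    apply Finset.sum_le_sum
    intro i _
    by_cases h : i ∈ s
    · simpa [h] using aux_coord (hq i) (hd i) hp
    · simpa [h] using aux_coord' (hq i) (hd i) hp
  rw [Finset.sum_add_distrib, Finset.sum_add_distrib, hq1, hd1] at key
  rw [Finset.sum_ite_mem, Finset.univ_inter, ← Finset.mul_sum] at key
  linarith

lemma aux_lower {m : ℕ} {p α : ℝ} (hp : 1 ≤ p) (hα1 : 1/2 ≤ α) (hα2 : α < 1)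
    (q d : Fin m → ℝ)
    (hq : ∀ i, 0 ≤ q i) (hd : ∀ i, 0 ≤ d i)
    (hq1 : ∑ i, q i ^ p = 1) (hd1 : ∑ i, d i ^ p = 1)
    (s t : Finset (Fin m)) (hst : s ∩ t = ∅)
    (hqs : α ≤ ∑ i ∈ s, q i ^ p) (hdt : α ≤ ∑ i ∈ t, d i ^ p) :
    2 ^ (1/p) * (α ^ (1/p) - (1-α) ^ (1/p)) ≤ (∑ i, |q i - d i| ^ p) ^ (1/p) := by
  have hp0 : (0:ℝ) < p := by linarith
  have hp0' : p ≠ 0 := ne_of_gt hp0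
  have hα0 : (0:ℝ) ≤ α := by linarith
  have h1α : (0:ℝ) ≤ 1 - α := by linarith
  have hdisj : Disjoint s t := Finset.disjoint_iff_inter_eq_empty.mpr hst
  set c : ℝ := α ^ (1/p) - (1-α) ^ (1/p) with hc
  have hc0 : 0 ≤ c := by
    have : (1-α) ^ (1/p) ≤ α ^ (1/p) :=
      Real.rpow_le_rpow h1α (by linarith) (by positivity)
    simp only [hc]; linarith
  have gen : ∀ (u : Finset (Fin m)) (f g : Fin m → ℝ), (∀ i, 0 ≤ f i) → (∀ i, 0 ≤ g i) →
      α ≤ ∑ i ∈ u, f i ^ p → ∑ i ∈ u, g i ^ p ≤ 1 - α →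
      c ^ p ≤ ∑ i ∈ u, |f i - g i| ^ p := by
    intro u f g hf hg hfu hgu
    have hsum_nonneg : (0:ℝ) ≤ ∑ i ∈ u, |f i - g i| ^ p :=
      Finset.sum_nonneg fun i _ => Real.rpow_nonneg (abs_nonneg _) p
    have mink := Real.Lp_add_le u (fun i => f i - g i) g (p := p) hp
    simp only [sub_add_cancel] at mink
    have hfabs : ∀ i ∈ u, |f i| ^ p = f i ^ p := fun i _ => by rw [abs_of_nonneg (hf i)]
    have hgabs : ∀ i ∈ u, |g i| ^ p = g i ^ p := fun i _ => by rw [abs_of_nonneg (hg i)]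
    rw [Finset.sum_congr rfl hfabs, Finset.sum_congr rfl hgabs] at mink
    have h1 : α ^ (1/p) ≤ (∑ i ∈ u, f i ^ p) ^ (1/p) :=
      Real.rpow_le_rpow hα0 hfu (by positivity)
    have h2 : (∑ i ∈ u, g i ^ p) ^ (1/p) ≤ (1-α) ^ (1/p) :=
      Real.rpow_le_rpow (Finset.sum_nonneg fun i _ => Real.rpow_nonneg (hg i) p) hgu
        (by positivity)
    have hone : c ≤ (∑ i ∈ u, |f i - g i| ^ p) ^ (1/p) := by
      have : α ^ (1/p) ≤ (∑ i ∈ u, |f i - g i| ^ p) ^ (1/p) + (1-α) ^ (1/p) :=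
        le_trans h1 (le_trans mink (by linarith))
      simp only [hc]; linarith
    calc c ^ p ≤ ((∑ i ∈ u, |f i - g i| ^ p) ^ (1/p)) ^ p :=
          Real.rpow_le_rpow hc0 hone (le_of_lt hp0)
      _ = ∑ i ∈ u, |f i - g i| ^ p := by
          rw [← Real.rpow_mul hsum_nonneg, one_div, inv_mul_cancel₀ hp0', Real.rpow_one]
  have hdsub : ∑ i ∈ s, d i ^ p ≤ 1 - α := by
    have hsub : ∑ i ∈ s ∪ t, d i ^ p ≤ ∑ i, d i ^ p :=
      Finset.sum_le_sum_of_subset_of_nonneg (Finset.subset_univ _)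
        (fun i _ _ => Real.rpow_nonneg (hd i) p)
    rw [Finset.sum_union hdisj, hd1] at hsub
    linarith
  have hqsub : ∑ i ∈ t, q i ^ p ≤ 1 - α := by
    have hsub : ∑ i ∈ s ∪ t, q i ^ p ≤ ∑ i, q i ^ p :=
      Finset.sum_le_sum_of_subset_of_nonneg (Finset.subset_univ _)
        (fun i _ _ => Real.rpow_nonneg (hq i) p)
    rw [Finset.sum_union hdisj, hq1] at hsub
    linarith
  have hgen1 := gen s q d hq hd hqs hdsub
  have hgen2 := gen t d q hd hq hdt hqsub
  have hgen2' : c ^ p ≤ ∑ i ∈ t, |q i - d i| ^ p := by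
    have : ∀ i ∈ t, |d i - q i| ^ p = |q i - d i| ^ p := fun i _ => by rw [abs_sub_comm]
    rwa [Finset.sum_congr rfl this] at hgen2
  have htot : 2 * c ^ p ≤ ∑ i, |q i - d i| ^ p := by
    have hsub : ∑ i ∈ s ∪ t, |q i - d i| ^ p ≤ ∑ i, |q i - d i| ^ p :=
      Finset.sum_le_sum_of_subset_of_nonneg (Finset.subset_univ _)
        (fun i _ _ => Real.rpow_nonneg (abs_nonneg _) p)
    rw [Finset.sum_union hdisj] at hsub
    linarith
  have hcp0 : (0:ℝ) ≤ c ^ p := Real.rpow_nonneg hc0 p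
  calc 2 ^ (1/p) * c = (2 * c ^ p) ^ (1/p) := by
        rw [Real.mul_rpow (by norm_num) hcp0, ← Real.rpow_mul hc0,
          mul_one_div_cancel hp0', Real.rpow_one]
    _ ≤ (∑ i, |q i - d i| ^ p) ^ (1/p) :=
        Real.rpow_le_rpow (by positivity) htot (by positivity)

lemma aux_cs {Ω : Type} [MeasurableSpace Ω] (μ : Measure Ω) [IsFiniteMeasure μ]
    {f : Ω → ℝ} (hf : Integrable f μ) (hf2 : Integrable (fun ω => f ω ^ 2) μ) :
    (∫ ω, f ω ∂μ) ^ 2 ≤ (μ Set.univ).toReal * ∫ ω, f ω ^ 2 ∂μ := by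
  set M := (μ Set.univ).toReal with hM
  set I := ∫ ω, f ω ∂μ with hI
  set J := ∫ ω, f ω ^ 2 ∂μ with hJ
  have hM0 : 0 ≤ M := ENNReal.toReal_nonneg
  rcases eq_or_lt_of_le hM0 with h0 | hMpos
  · have huniv : μ Set.univ = 0 := by
      have hne := measure_ne_top μ Set.univ
      have : (μ Set.univ).toReal = 0 := by rw [← hM, ← h0]
      exact (ENNReal.toReal_eq_zero_iff _).mp this |>.resolve_right hne
    have hμ : μ = 0 := Measure.measure_univ_eq_zero.mp huniv
    simp [hI, hJ, hμ, ← h0]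
  · set c : ℝ := I / M with hc
    have key : 0 ≤ ∫ ω, (f ω - c) ^ 2 ∂μ := integral_nonneg fun ω => sq_nonneg _
    have expand : ∫ ω, (f ω - c) ^ 2 ∂μ = J - 2 * c * I + c ^ 2 * M := by
      have heq : (fun ω => (f ω - c) ^ 2) =
          fun ω => (f ω ^ 2 - 2 * c * f ω) + c ^ 2 := by
        funext ω; ring
      have h1 : Integrable (fun ω => f ω ^ 2 - 2 * c * f ω) μ :=
        hf2.sub (hf.const_mul (2 * c))
      have h2 : Integrable (fun ω => 2 * c * f ω) μ := hf.const_mul (2 * c)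
      rw [heq, integral_add h1 (integrable_const _),
        integral_sub hf2 h2, MeasureTheory.integral_const_mul, integral_const, smul_eq_mul, measureReal_def]
      rw [← hI, ← hJ, ← hM]
      ring
    rw [expand] at key
    have hMne : M ≠ 0 := ne_of_gt hMpos
    have hckey : J - 2 * c * I + c ^ 2 * M = J - I ^ 2 / M := by
      rw [hc]; field_simp; ring
    rw [hckey] at key
    have : I ^ 2 / M ≤ J := by linarith
    calc I ^ 2 = M * (I ^ 2 / M) := by field_simp
      _ ≤ M * J := by exact mul_le_mul_of_nonneg_left this hM0

set_option maxHeartbeats 2000000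

/-- fixed-dimension quantitative form of paper Theorem 7.3, stability of
sparse vector search under concentration and overlap of importance.  Here `q, d` are an
independently drawn ℓ_p-unit nonnegative query and document, `T_q, T_d` their random head
index sets; (iii) is query concentration of importance, (iv) is probabilistic document
concentration with pass rate `ρ`, (v) caps the chance a fixed coordinate lies in a head
set, and (vi) is overlap of importance with parameters `(γ, π)`.  Setting
`δ = ‖q - d‖_p`, `X = (2 - 2γ)^{1/p}` and
`Y_m = ((ρ - τ²/m)/(1-π))·2^{1/p}·(α^{1/p} - (1-α)^{1/p})`, if `Y_m > X` then
`E[δ] > 0` and `Var(δ)/(E[δ])² ≥ (π/4)·(1 - τ²/m)·(Y_m - X)²`. -/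
theorem stmt_15 {Ω : Type} [MeasureSpace Ω] [IsProbabilityMeasure (ℙ : Measure Ω)]
    {p : ℝ} (hp : 1 ≤ p) {m : ℕ} (hm : 0 < m)
    {α γ π ρ τ : ℝ}
    (hα1 : 1 / 2 ≤ α) (hα2 : α < 1) (hγ : 0 < γ)
    (hπ0 : 0 < π) (hπ1 : π < 1) (hρ0 : 0 < ρ) (hρ1 : ρ ≤ 1)
    (hτ : 0 < τ) (hτm : τ ^ 2 < m) (hρτ : ρ > τ ^ 2 / m)
    (q d : Ω → Fin m → ℝ) (Tq Td : Ω → Finset (Fin m))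
    (hqmeas : Measurable q) (hdmeas : Measurable d)
    (hTqmeas : Measurable Tq) (hTdmeas : Measurable Td)
    -- (i) the pair (q, T_q) is independent of the pair (d, T_d)
    (hindep : IndepFun (fun ω => (q ω, Tq ω)) (fun ω => (d ω, Td ω)) ℙ)
    -- (ii) a.s. nonnegative coordinates and unit ℓ_p^p mass
    (hunit : ∀ᵐ ω, (∀ i, 0 ≤ q ω i) ∧ (∀ i, 0 ≤ d ω i) ∧
      (∑ i, q ω i ^ p = 1) ∧ (∑ i, d ω i ^ p = 1))
    -- (iii) concentration of importance for queries
    (hconcq : ∀ᵐ ω, α ≤ ∑ i ∈ Tq ω, q ω i ^ p)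
    -- (iv) probabilistic concentration of importance for documents
    (hconcd : ρ ≤ (ℙ {ω | α ≤ ∑ i ∈ Td ω, d ω i ^ p}).toReal)
    -- (v) head-membership probability caps
    (hheadq : ∀ i, (ℙ {ω | i ∈ Tq ω}).toReal ≤ τ / m)
    (hheadd : ∀ i, (ℙ {ω | i ∈ Td ω}).toReal ≤ τ / m)
    -- (vi) overlap of importance: π ≤ Pr[S ≥ γ] ≤ τ²/m
    (hoverlap1 : π ≤
      (ℙ {ω | γ ≤ ∑ i ∈ Tq ω ∩ Td ω, min (q ω i ^ p) (d ω i ^ p)}).toReal)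
    (hoverlap2 :
      (ℙ {ω | γ ≤ ∑ i ∈ Tq ω ∩ Td ω, min (q ω i ^ p) (d ω i ^ p)}).toReal ≤ τ ^ 2 / m)
    -- the gap condition Y_m > X
    (hYX : ((ρ - τ ^ 2 / m) / (1 - π)) * 2 ^ (1 / p) *
        (α ^ (1 / p) - (1 - α) ^ (1 / p)) > (2 - 2 * γ) ^ (1 / p)) :
    (0 < ∫ ω, (∑ i, |q ω i - d ω i| ^ p) ^ (1 / p)) ∧
    variance (fun ω => (∑ i, |q ω i - d ω i| ^ p) ^ (1 / p)) ℙ /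
        (∫ ω, (∑ i, |q ω i - d ω i| ^ p) ^ (1 / p)) ^ 2 ≥
      (π / 4) * (1 - τ ^ 2 / m) *
        (((ρ - τ ^ 2 / m) / (1 - π)) * 2 ^ (1 / p) *
            (α ^ (1 / p) - (1 - α) ^ (1 / p)) - (2 - 2 * γ) ^ (1 / p)) ^ 2 := by
  have hp0 : (0:ℝ) < p := lt_of_lt_of_le one_pos hp
  have hpne : p ≠ 0 := ne_of_gt hp0
  have hmR : (0:ℝ) < (m:ℝ) := by exact_mod_cast hm
  -- abbreviations
  set g : Ω → ℝ := fun ω => (∑ i, |q ω i - d ω i| ^ p) ^ (1 / p) with hgdef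
  set Z : Set Ω := {ω | γ ≤ ∑ i ∈ Tq ω ∩ Td ω, min (q ω i ^ p) (d ω i ^ p)} with hZdef
  set C : Set Ω := {ω | α ≤ ∑ i ∈ Td ω, d ω i ^ p} with hCdef
  set Ev : Set Ω := {ω | Tq ω ∩ Td ω = ∅} with hEvdef
  set X : ℝ := (2 - 2 * γ) ^ (1 / p) with hXdef
  set cα : ℝ := α ^ (1 / p) - (1 - α) ^ (1 / p) with hcadef
  set D : ℝ := 2 ^ (1 / p) * cα with hDdef
  set Y : ℝ := ((ρ - τ ^ 2 / m) / (1 - π)) * 2 ^ (1 / p) * cα with hYdef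
  have hYD : Y = ((ρ - τ ^ 2 / m) / (1 - π)) * D := by rw [hYdef, hDdef]; ring
  -- basic measurability of coordinate events
  have hAi : ∀ i : Fin m, MeasurableSet {ω | i ∈ Tq ω} :=
    fun i => hTqmeas (MeasurableSpace.measurableSet_top (s := {s : Finset (Fin m) | i ∈ s}))
  have hBi : ∀ i : Fin m, MeasurableSet {ω | i ∈ Td ω} :=
    fun i => hTdmeas (MeasurableSpace.measurableSet_top (s := {s : Finset (Fin m) | i ∈ s}))
  -- measurability of Z
  have hSrw : (fun ω => ∑ i ∈ Tq ω ∩ Td ω, min (q ω i ^ p) (d ω i ^ p)) =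
      fun ω => ∑ i : Fin m, if i ∈ Tq ω ∩ Td ω then min (q ω i ^ p) (d ω i ^ p) else 0 := by
    funext ω; rw [Finset.sum_ite_mem, Finset.univ_inter]
  have hSmeas : Measurable (fun ω => ∑ i ∈ Tq ω ∩ Td ω, min (q ω i ^ p) (d ω i ^ p)) := by
    rw [hSrw]
    refine Finset.measurable_sum _ fun i _ => ?_
    have hset : MeasurableSet {ω | i ∈ Tq ω ∩ Td ω} := by
      have : {ω | i ∈ Tq ω ∩ Td ω} = {ω | i ∈ Tq ω} ∩ {ω | i ∈ Td ω} := by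
        ext ω; simp [Finset.mem_inter]
      rw [this]; exact (hAi i).inter (hBi i)
    exact Measurable.ite hset (by fun_prop) measurable_const
  have hmZ : MeasurableSet Z := measurableSet_le measurable_const hSmeas
  -- measurability of C
  have hmC : MeasurableSet C := by
    have hrw : (fun ω => ∑ i ∈ Td ω, d ω i ^ p) =
        fun ω => ∑ i : Fin m, if i ∈ Td ω then d ω i ^ p else 0 := by
      funext ω; rw [Finset.sum_ite_mem, Finset.univ_inter]
    have hmeas : Measurable (fun ω => ∑ i ∈ Td ω, d ω i ^ p) := by
      rw [hrw]
      refine Finset.measurable_sum _ fun i _ => ?_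
      exact Measurable.ite (hBi i) (by fun_prop) measurable_const
    exact measurableSet_le measurable_const hmeas
  -- measurability of Ev
  have hEvrepr : Ev = (⋃ i, ({ω | i ∈ Tq ω} ∩ {ω | i ∈ Td ω}))ᶜ := by
    ext ω
    simp only [hEvdef, Set.mem_setOf_eq, Set.mem_compl_iff, Set.mem_iUnion, Set.mem_inter_iff,
      not_exists, Finset.eq_empty_iff_forall_notMem, Finset.mem_inter]
  have hmE : MeasurableSet Ev := by
    rw [hEvrepr]
    exact (MeasurableSet.iUnion fun i => (hAi i).inter (hBi i)).compl
  have hmW : MeasurableSet (C ∩ Ev) := hmC.inter hmE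
  -- measurability of g
  have hgmeas : Measurable g := by
    rw [hgdef]
    have hsum : Measurable (fun ω => ∑ i, |q ω i - d ω i| ^ p) := by fun_prop
    fun_prop
  have hg0 : ∀ ω, 0 ≤ g ω := fun ω =>
    Real.rpow_nonneg (Finset.sum_nonneg fun i _ => Real.rpow_nonneg (abs_nonneg _) _) _
  -- the a.e. good set
  have hNg : ∀ᵐ ω, ((∀ i, 0 ≤ q ω i) ∧ (∀ i, 0 ≤ d ω i) ∧
      (∑ i, q ω i ^ p = 1) ∧ (∑ i, d ω i ^ p = 1)) ∧ α ≤ ∑ i ∈ Tq ω, q ω i ^ p :=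
    hunit.and hconcq
  -- a.e. bound g ≤ 2
  have hg2ae : ∀ᵐ ω, g ω ≤ 2 := by
    filter_upwards [hNg] with ω h
    obtain ⟨⟨h1, h2, h3, h4⟩, _⟩ := h
    have hsum : (∑ i, |q ω i - d ω i| ^ p) ≤ 2 := by
      have := aux_upper hp (q ω) (d ω) h1 h2 h3 h4 ∅
      simpa using this
    have hsum0 : (0:ℝ) ≤ ∑ i, |q ω i - d ω i| ^ p :=
      Finset.sum_nonneg fun i _ => Real.rpow_nonneg (abs_nonneg _) _
    calc g ω ≤ (2:ℝ) ^ (1/p) := Real.rpow_le_rpow hsum0 hsum (by positivity)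
      _ ≤ (2:ℝ) ^ (1:ℝ) := Real.rpow_le_rpow_of_exponent_le one_le_two
          (by rw [div_le_one hp0]; exact hp)
      _ = 2 := Real.rpow_one 2
  -- probability of Z
  have hZpos : 0 < (ℙ Z).toReal := lt_of_lt_of_le hπ0 hoverlap1
  have hτm' : τ ^ 2 / m < 1 := by rw [div_lt_one hmR]; exact hτm
  have hz1 : (ℙ Z).toReal < 1 := lt_of_le_of_lt hoverlap2 hτm'
  -- 2 - 2γ ≥ 0
  have hX0 : (0:ℝ) ≤ 2 - 2 * γ := by
    by_contra hneg
    push_neg at hneg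
    have hae : ∀ᵐ ω, ω ∉ Z := by
      filter_upwards [hNg] with ω h hZω
      obtain ⟨⟨h1, h2, h3, h4⟩, _⟩ := h
      have hSγ : γ ≤ ∑ i ∈ Tq ω ∩ Td ω, min (q ω i ^ p) (d ω i ^ p) := hZω
      have hup := aux_upper hp (q ω) (d ω) h1 h2 h3 h4 (Tq ω ∩ Td ω)
      have hsum0 : (0:ℝ) ≤ ∑ i, |q ω i - d ω i| ^ p :=
        Finset.sum_nonneg fun i _ => Real.rpow_nonneg (abs_nonneg _) _
      linarith
    have : ℙ Z = 0 := by
      rw [← MeasureTheory.measure_eq_zero_iff_ae_notMem] at hae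
      exact hae
    rw [this] at hZpos
    simp at hZpos
  have hXnn : 0 ≤ X := Real.rpow_nonneg hX0 _
  -- a.e. bound on Z : g ≤ X
  have hgXae : ∀ᵐ ω, ω ∈ Z → g ω ≤ X := by
    filter_upwards [hNg] with ω h hZω
    obtain ⟨⟨h1, h2, h3, h4⟩, _⟩ := h
    have hSγ : γ ≤ ∑ i ∈ Tq ω ∩ Td ω, min (q ω i ^ p) (d ω i ^ p) := hZω
    have hup := aux_upper hp (q ω) (d ω) h1 h2 h3 h4 (Tq ω ∩ Td ω)
    have hsum0 : (0:ℝ) ≤ ∑ i, |q ω i - d ω i| ^ p :=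
      Finset.sum_nonneg fun i _ => Real.rpow_nonneg (abs_nonneg _) _
    exact Real.rpow_le_rpow hsum0 (by linarith) (by positivity)
  -- a.e. bound on C ∩ Ev : D ≤ g
  have hgDae : ∀ᵐ ω, ω ∈ C ∩ Ev → D ≤ g ω := by
    filter_upwards [hNg] with ω h hWω
    obtain ⟨⟨h1, h2, h3, h4⟩, h5⟩ := h
    obtain ⟨hCω, hEω⟩ := hWω
    exact aux_lower hp hα1 hα2 (q ω) (d ω) h1 h2 h3 h4 (Tq ω) (Td ω) hEω h5 hCω
  -- C ∩ Ev ⊆ Zᶜ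
  have hWZc : C ∩ Ev ⊆ Zᶜ := by
    intro ω hω hZω
    have hE : Tq ω ∩ Td ω = ∅ := hω.2
    have : γ ≤ ∑ i ∈ Tq ω ∩ Td ω, min (q ω i ^ p) (d ω i ^ p) := hZω
    rw [hE, Finset.sum_empty] at this
    linarith
  -- head collision bound
  have hEcR : (ℙ Evᶜ).toReal ≤ τ ^ 2 / m := by
    have hEc : Evᶜ = ⋃ i, ({ω | i ∈ Tq ω} ∩ {ω | i ∈ Td ω}) := by
      rw [hEvrepr, compl_compl]
    have hprod : ∀ i : Fin m, ℙ ({ω | i ∈ Tq ω} ∩ {ω | i ∈ Td ω}) =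
        ℙ {ω | i ∈ Tq ω} * ℙ {ω | i ∈ Td ω} := by
      intro i
      have hkey := (indepFun_iff_measure_inter_preimage_eq_mul.mp hindep)
        (Set.univ ×ˢ {s : Finset (Fin m) | i ∈ s})
        (Set.univ ×ˢ {s : Finset (Fin m) | i ∈ s})
        (MeasurableSet.univ.prod (MeasurableSpace.measurableSet_top))
        (MeasurableSet.univ.prod (MeasurableSpace.measurableSet_top))
      have e1 : (fun ω => (q ω, Tq ω)) ⁻¹' (Set.univ ×ˢ {s : Finset (Fin m) | i ∈ s}) =
          {ω | i ∈ Tq ω} := by ext ω; simp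
      have e2 : (fun ω => (d ω, Td ω)) ⁻¹' (Set.univ ×ˢ {s : Finset (Fin m) | i ∈ s}) =
          {ω | i ∈ Td ω} := by ext ω; simp
      rwa [e1, e2] at hkey
    have h1 : ℙ Evᶜ ≤ ∑ i : Fin m, ℙ ({ω | i ∈ Tq ω} ∩ {ω | i ∈ Td ω}) := by
      rw [hEc]
      exact (measure_iUnion_le _).trans_eq (tsum_fintype _)
    have hne : (∑ i : Fin m, ℙ ({ω | i ∈ Tq ω} ∩ {ω | i ∈ Td ω})) ≠ ⊤ := by
      refine (ENNReal.sum_lt_top.mpr fun i _ => ?_).ne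
      exact measure_lt_top _ _
    have h2 : (ℙ Evᶜ).toReal ≤
        ∑ i : Fin m, (ℙ ({ω | i ∈ Tq ω} ∩ {ω | i ∈ Td ω})).toReal := by
      refine le_trans (ENNReal.toReal_mono hne h1) ?_
      rw [ENNReal.toReal_sum fun i _ => measure_ne_top _ _]
    refine le_trans h2 ?_
    have hbound : ∀ i : Fin m, (ℙ ({ω | i ∈ Tq ω} ∩ {ω | i ∈ Td ω})).toReal ≤
        (τ / m) * (τ / m) := by
      intro i
      rw [hprod i, ENNReal.toReal_mul]
      exact mul_le_mul (hheadq i) (hheadd i) ENNReal.toReal_nonneg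
        (le_trans ENNReal.toReal_nonneg (hheadq i))
    calc ∑ i : Fin m, (ℙ ({ω | i ∈ Tq ω} ∩ {ω | i ∈ Td ω})).toReal
        ≤ ∑ _i : Fin m, (τ / m) * (τ / m) := Finset.sum_le_sum fun i _ => hbound i
      _ = m * ((τ / m) * (τ / m)) := by
          rw [Finset.sum_const, Finset.card_univ, Fintype.card_fin, nsmul_eq_mul]
      _ = τ ^ 2 / m := by field_simp
  -- probability of C ∩ Ev
  have hWge : ρ - τ ^ 2 / m ≤ (ℙ (C ∩ Ev)).toReal := by
    have hsub : C ⊆ (C ∩ Ev) ∪ Evᶜ := by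
      intro ω hω
      by_cases h : ω ∈ Ev
      · exact Or.inl ⟨hω, h⟩
      · exact Or.inr h
    have h1 : ℙ C ≤ ℙ (C ∩ Ev) + ℙ Evᶜ :=
      le_trans (measure_mono hsub) (measure_union_le _ _)
    have h2 : (ℙ C).toReal ≤ (ℙ (C ∩ Ev)).toReal + (ℙ Evᶜ).toReal := by
      have hne : ℙ (C ∩ Ev) + ℙ Evᶜ ≠ ⊤ :=
        ENNReal.add_ne_top.mpr ⟨measure_ne_top _ _, measure_ne_top _ _⟩
      refine le_trans (ENNReal.toReal_mono hne h1) ?_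
      rw [ENNReal.toReal_add (measure_ne_top _ _) (measure_ne_top _ _)]
    have hC : ρ ≤ (ℙ C).toReal := hconcd
    linarith
  -- positivity of D
  have ht2 : (0:ℝ) < 2 ^ (1/p) := Real.rpow_pos_of_pos (by norm_num) _
  have hκ : (0:ℝ) < (ρ - τ ^ 2 / m) / (1 - π) := by
    apply div_pos <;> linarith
  have hca : 0 < cα := by
    by_contra hc
    push_neg at hc
    have hYle : Y ≤ 0 := by
      rw [hYdef]
      exact mul_nonpos_of_nonneg_of_nonpos (le_of_lt (by positivity)) hc
    have : X < Y := hYX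
    linarith
  have hD0 : 0 < D := mul_pos ht2 hca
  -- integrability
  have hgnorm : ∀ᵐ ω, ‖g ω‖ ≤ 2 := by
    filter_upwards [hg2ae] with ω h
    rw [Real.norm_eq_abs, abs_of_nonneg (hg0 ω)]
    exact h
  have hgint : Integrable g ℙ :=
    Integrable.mono' (integrable_const 2) hgmeas.aestronglyMeasurable hgnorm
  have hg2meas : Measurable (fun ω => g ω ^ 2) := hgmeas.pow_const 2
  have hg2int : Integrable (fun ω => g ω ^ 2) ℙ := by
    refine Integrable.mono' (integrable_const 4) hg2meas.aestronglyMeasurable ?_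
    filter_upwards [hg2ae] with ω h
    rw [Real.norm_eq_abs, abs_of_nonneg (sq_nonneg _)]
    have h4 : g ω ^ 2 ≤ 2 ^ 2 := pow_le_pow_left₀ (hg0 ω) h 2
    norm_num at h4
    exact h4
  have hmem2 : MemLp g 2 ℙ :=
    MemLp.of_bound hgmeas.aestronglyMeasurable 2 hgnorm
  -- set integrals
  set a : ℝ := ∫ ω in Z, g ω with hadef
  set b : ℝ := ∫ ω in Zᶜ, g ω with hbdef
  set z : ℝ := (ℙ Z).toReal with hzdef
  have hzπ : π ≤ z := hoverlap1
  have hzτ : z ≤ τ ^ 2 / m := hoverlap2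
  have hz0 : 0 < z := hZpos
  have hzlt1 : z < 1 := hz1
  have hZc : (ℙ Zᶜ).toReal = 1 - z := by
    rw [prob_compl_eq_one_sub hmZ, ENNReal.toReal_sub_of_le prob_le_one ENNReal.one_ne_top,
      ENNReal.toReal_one, hzdef]
  have hab : a + b = ∫ ω, g ω := integral_add_compl hmZ hgint
  have ha0 : 0 ≤ a := setIntegral_nonneg hmZ fun ω _ => hg0 ω
  have hb0 : 0 ≤ b := setIntegral_nonneg hmZ.compl fun ω _ => hg0 ω
  -- a ≤ z * X
  have haX : a ≤ z * X := by
    have hres : ∀ᵐ ω ∂((ℙ : Measure Ω).restrict Z), g ω ≤ X := (ae_restrict_iff' hmZ).mpr hgXae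
    have := integral_mono_ae hgint.restrict (integrable_const X) hres
    rwa [setIntegral_const, smul_eq_mul] at this
  -- D * ℙ(C ∩ Ev) ≤ b
  have hbD : D * (ℙ (C ∩ Ev)).toReal ≤ b := by
    have step1 : ∫ ω in C ∩ Ev, g ω ≤ ∫ ω in Zᶜ, g ω := by
      refine setIntegral_mono_set hgint.integrableOn ?_ (hWZc.eventuallyLE)
      exact Filter.Eventually.of_forall fun ω => hg0 ω
    have hres : ∀ᵐ ω ∂((ℙ : Measure Ω).restrict (C ∩ Ev)), D ≤ g ω := (ae_restrict_iff' hmW).mpr hgDae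
    have step2 := integral_mono_ae (integrable_const D) hgint.restrict hres
    rw [setIntegral_const, smul_eq_mul] at step2
    calc D * (ℙ (C ∩ Ev)).toReal = (ℙ (C ∩ Ev)).toReal * D := by ring
      _ ≤ ∫ ω in C ∩ Ev, g ω := step2
      _ ≤ b := step1
  have hWpos : 0 < (ℙ (C ∩ Ev)).toReal := lt_of_lt_of_le (by linarith) hWge
  -- mean positivity and upper bound
  have hbpos : 0 < b := lt_of_lt_of_le (mul_pos hD0 hWpos) hbD
  have hμpos : 0 < ∫ ω, g ω := by rw [← hab]; linarith
  have hμ2 : ∫ ω, g ω ≤ 2 := by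
    have := integral_mono_ae hgint (integrable_const 2) hg2ae
    rwa [integral_const, probReal_univ, one_smul] at this
  -- Cauchy-Schwarz on Z and Zᶜ
  have hcs1 : a ^ 2 ≤ z * ∫ ω in Z, g ω ^ 2 := by
    have := aux_cs ((ℙ : Measure Ω).restrict Z) hgint.restrict hg2int.restrict
    rwa [Measure.restrict_apply_univ] at this
  have hcs2 : b ^ 2 ≤ (1 - z) * ∫ ω in Zᶜ, g ω ^ 2 := by
    have := aux_cs ((ℙ : Measure Ω).restrict Zᶜ) hgint.restrict hg2int.restrict
    rwa [Measure.restrict_apply_univ, hZc] at this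
  have hsplit : (∫ ω in Z, g ω ^ 2) + ∫ ω in Zᶜ, g ω ^ 2 = ∫ ω, g ω ^ 2 :=
    integral_add_compl hmZ hg2int
  -- variance formula
  have hvar : variance g ℙ = (∫ ω, g ω ^ 2) - (∫ ω, g ω) ^ 2 := by
    rw [variance_eq_sub hmem2]
    congr 1
  -- conditional means
  set A : ℝ := a / z with hAdef
  set B : ℝ := b / (1 - z) with hBdef
  have h1z : 0 < 1 - z := by linarith
  have hA : A ≤ X := by
    rw [hAdef, div_le_iff₀ hz0]
    linarith
  have hB : Y ≤ B := by
    have h1 : Y ≤ D * (ρ - τ ^ 2 / m) / (1 - π) := by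
      rw [hYD]; rw [div_mul_eq_mul_div, mul_comm]
    have h2 : D * (ρ - τ ^ 2 / m) / (1 - π) ≤ D * (ρ - τ ^ 2 / m) / (1 - z) := by
      apply div_le_div_of_nonneg_left _ h1z _
      · have : 0 ≤ ρ - τ ^ 2 / m := by linarith
        positivity
      · linarith
    have h3 : D * (ρ - τ ^ 2 / m) / (1 - z) ≤ B := by
      have hnum : D * (ρ - τ ^ 2 / m) ≤ b :=
        le_trans (mul_le_mul_of_nonneg_left hWge (le_of_lt hD0)) hbD
      rw [hBdef]
      exact (div_le_div_iff_of_pos_right h1z).mpr hnum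
    linarith
  have hBA : Y - X ≤ B - A := by linarith
  have hYXpos : 0 < Y - X := by
    have : X < Y := hYX
    linarith
  -- variance lower bound
  have hvar_ge : z * (1 - z) * (B - A) ^ 2 ≤ variance g ℙ := by
    have ea : a = A * z := by rw [hAdef]; field_simp
    have eb : b = B * (1 - z) := by rw [hBdef]; field_simp
    have h1 : A ^ 2 * z ≤ ∫ ω in Z, g ω ^ 2 := by
      rw [ea] at hcs1
      have h'' : z * (A ^ 2 * z) ≤ z * ∫ ω in Z, g ω ^ 2 := by
        have hzz : z * (A ^ 2 * z) = (A * z) ^ 2 := by ring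
        rw [hzz]; exact hcs1
      exact le_of_mul_le_mul_left h'' hz0
    have h2 : B ^ 2 * (1 - z) ≤ ∫ ω in Zᶜ, g ω ^ 2 := by
      rw [eb] at hcs2
      have h'' : (1 - z) * (B ^ 2 * (1 - z)) ≤ (1 - z) * ∫ ω in Zᶜ, g ω ^ 2 := by
        have hzz : (1 - z) * (B ^ 2 * (1 - z)) = (B * (1 - z)) ^ 2 := by ring
        rw [hzz]; exact hcs2
      exact le_of_mul_le_mul_left h'' h1z
    have hident : A ^ 2 * z + B ^ 2 * (1 - z) - (A * z + B * (1 - z)) ^ 2 =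
        z * (1 - z) * (A - B) ^ 2 := by ring
    have hμeq : (∫ ω, g ω) = A * z + B * (1 - z) := by
      rw [← hab, ea, eb]
    rw [hvar, hμeq]
    have hsym : (A - B) ^ 2 = (B - A) ^ 2 := by ring
    linarith [h1, h2, hsplit, hident]
  have hfinal1 : π * (1 - τ ^ 2 / m) ≤ z * (1 - z) :=
    mul_le_mul hzπ (by linarith) (by linarith) (le_of_lt hz0)
  have hfinal2 : (Y - X) ^ 2 ≤ (B - A) ^ 2 :=
    pow_le_pow_left₀ (by linarith) hBA 2
  have hfinal : π * (1 - τ ^ 2 / m) * (Y - X) ^ 2 ≤ variance g ℙ := by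
    have h1 : π * (1 - τ ^ 2 / m) * (Y - X) ^ 2 ≤ z * (1 - z) * (B - A) ^ 2 :=
      mul_le_mul hfinal1 hfinal2 (sq_nonneg _) (by positivity)
    linarith
  refine ⟨hμpos, ?_⟩
  -- final division step
  have hμsq : (∫ ω, g ω) ^ 2 ≤ 4 := by
    have h4 : (∫ ω, g ω) ^ 2 ≤ 2 ^ 2 := pow_le_pow_left₀ (le_of_lt hμpos) hμ2 2
    norm_num at h4
    exact h4
  have hμsqpos : 0 < (∫ ω, g ω) ^ 2 := by positivity
  have hvnn : 0 ≤ variance g ℙ := variance_nonneg _ _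
  have hdiv : variance g ℙ / 4 ≤ variance g ℙ / (∫ ω, g ω) ^ 2 :=
    div_le_div_of_nonneg_left hvnn hμsqpos hμsq
  have : (π / 4) * (1 - τ ^ 2 / m) * (Y - X) ^ 2 ≤ variance g ℙ / 4 := by linarith
  calc (π / 4) * (1 - τ ^ 2 / m) * (Y - X) ^ 2 ≤ variance g ℙ / 4 := this
    _ ≤ variance g ℙ / (∫ ω, g ω) ^ 2 := hdiv
end
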